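/- Let X be a k-coarsely connected uniformly discrete metric space of bounded geometry (k ≥ 1) and let r ≥ k. Let A ⊆ X be a bounded subset and δ ∈ (0,1). Then cut_r^δ(A) ≥ λ · h_r(A) · |A|, where λ = min(1/4, (1−δ)/2) / β_X(r). -/
import Mathlib


open Metric Set Filter

/-- The `α`-neighbourhood `A^{+α}` of a subset `A` of a metric space. -/
def thickSet {X : Type*} [PseudoMetricSpace X] (A : Set X) (α : ℝ) : Set X :=
  {x | ∃ a ∈ A, dist x a ≤ α}

/-- `c 0, …, c n` is a `k`-path (of length `n`) in `Y`. -/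
def IsKPath {X : Type*} [PseudoMetricSpace X] (k : ℝ) (Y : Set X) (c : ℕ → X) (n : ℕ) : Prop :=
  (∀ i ≤ n, c i ∈ Y) ∧ ∀ i < n, dist (c i) (c (i + 1)) ≤ k

/-- `a` and `b` are connected by a `k`-path in `Y`. -/
def KConn {X : Type*} [PseudoMetricSpace X] (k : ℝ) (Y : Set X) (a b : X) : Prop :=
  ∃ n : ℕ, ∃ c : ℕ → X, c 0 = a ∧ c n = b ∧ IsKPath k Y c n

/-- `Y` is `k`-coarsely connected. -/
def KCoarselyConnected {X : Type*} [PseudoMetricSpace X] (k : ℝ) (Y : Set X) : Prop :=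
  ∀ a ∈ Y, ∀ b ∈ Y, KConn k Y a b

/-- `C` is a `k`-coarsely connected component of `Y`, i.e. a maximal
`k`-coarsely connected subset of `Y`. -/
def IsKComponent {X : Type*} [PseudoMetricSpace X] (k : ℝ) (Y C : Set X) : Prop :=
  C ⊆ Y ∧ KCoarselyConnected k C ∧
    ∀ C' : Set X, C ⊆ C' → C' ⊆ Y → KCoarselyConnected k C' → C' = C

/-- `Y` is `k`-coarsely geodesic with control function `σ`. -/
def KCoarselyGeodesicWith {X : Type*} [PseudoMetricSpace X] (k : ℝ) (σ : ℝ → ℝ) (Y : Set X) :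
    Prop :=
  ∀ a ∈ Y, ∀ b ∈ Y, ∃ n : ℕ, ∃ c : ℕ → X,
    c 0 = a ∧ c n = b ∧ IsKPath k Y c n ∧ (n : ℝ) ≤ σ (dist a b)

/-- `Y` is `k`-coarsely geodesic. -/
def KCoarselyGeodesic {X : Type*} [PseudoMetricSpace X] (k : ℝ) (Y : Set X) : Prop :=
  ∃ σ : ℝ → ℝ, KCoarselyGeodesicWith k σ Y

/-- `Y` is coarsely geodesic. -/
def CoarselyGeodesic {X : Type*} [PseudoMetricSpace X] (Y : Set X) : Prop :=
  ∃ k > (0 : ℝ), KCoarselyGeodesic k Y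

/-- The collection `𝒵` of subsets of `X` coarsely separates the subset `Y`. -/
def CoarselySeparates {X : Type*} [PseudoMetricSpace X] (𝒵 : Set (Set X)) (Y : Set X) : Prop :=
  ∃ k > (0 : ℝ), ∃ L ≥ (0 : ℝ), KCoarselyConnected k Y ∧
    ∀ D ≥ (0 : ℝ), ∃ Z ∈ 𝒵, ∃ C₁ C₂ : Set X,
      IsKComponent k (Y \ thickSet Z L) C₁ ∧ IsKComponent k (Y \ thickSet Z L) C₂ ∧ C₁ ≠ C₂ ∧
      (∃ p ∈ C₁, ∀ z ∈ Z, D ≤ dist p z) ∧ (∃ q ∈ C₂, ∀ z ∈ Z, D ≤ dist q z)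

/-- A uniformly discrete metric space of bounded geometry: distinct points are at distance
`≥ 1` and balls are finite, of uniformly bounded cardinality. -/
def UDBG (X : Type*) [PseudoMetricSpace X] : Prop :=
  (∀ x y : X, x ≠ y → 1 ≤ dist x y) ∧
    ∀ r : ℝ, ∃ N : ℕ, ∀ x : X, (Metric.closedBall x r).Finite ∧ (Metric.closedBall x r).ncard ≤ N

/-- `A` is an `α`-persistent family (for the coarse connectivity constant `k`,
defined for radii `r ≥ r₀`). -/
def Persistent {X : Type*} [PseudoMetricSpace X] (k r₀ α : ℝ) (A : X → ℝ → Set X) : Prop :=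
  ∀ r, r₀ ≤ r →
    (∀ x : X, A x r ⊆ Metric.closedBall x (4 * r)) ∧
    (∀ x y : X, (A x r).ncard = (A y r).ncard) ∧
    (∀ x y : X, dist x y ≤ k → α * ((A x r).ncard : ℝ) ≤ ((A x r ∩ A y r).ncard : ℝ))

/-- `S` is an `(r, δ)`-cut of `A`: `S ⊆ A` and every `r`-coarsely connected component of
`A \ S` has volume at most `δ|A|`. -/
def IsCut {X : Type*} [PseudoMetricSpace X] (r δ : ℝ) (A S : Set X) : Prop :=
  S ⊆ A ∧ ∀ C : Set X, IsKComponent r (A \ S) C → ((C.ncard : ℝ) ≤ δ * (A.ncard : ℝ))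

/-- `cut_r^δ(A)`: the minimal volume of an `(r, δ)`-cut of `A`. -/
noncomputable def cutVal {X : Type*} [PseudoMetricSpace X] (r δ : ℝ) (A : Set X) : ℕ :=
  sInf {n : ℕ | ∃ S : Set X, IsCut r δ A S ∧ S.ncard = n}

/-- `β_X(r)`: the supremum of the cardinalities of balls of radius `r` in `X`. -/
noncomputable def ballVolSup (X : Type*) [PseudoMetricSpace X] (r : ℝ) : ℕ :=
  ⨆ x : X, (Metric.closedBall x r).ncard

/-- The `r`-Cheeger constant of a bounded subset `A`:
`h_r(A) = min { |∂_r B ∩ A| / |B| : B ⊆ A, 0 < |B| ≤ |A|/2 }`, where `∂_r B = B^{+r} \ B`. -/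
noncomputable def cheeger {X : Type*} [PseudoMetricSpace X] (r : ℝ) (A : Set X) : ℝ :=
  sInf {v : ℝ | ∃ B : Set X, B ⊆ A ∧ 0 < B.ncard ∧ (B.ncard : ℝ) ≤ (A.ncard : ℝ) / 2 ∧
    v = (((thickSet B r \ B) ∩ A).ncard : ℝ) / (B.ncard : ℝ)}

section Aux
variable {X : Type*} [PseudoMetricSpace X] {k : ℝ} {Y W : Set X} {a b x y z : X}

lemma kconn_refl (ha : a ∈ Y) : KConn k Y a a :=
  ⟨0, fun _ => a, rfl, rfl, fun _ _ => ha, fun i hi => absurd hi (Nat.not_lt_zero i)⟩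

lemma kconn_mono {Y' : Set X} (h : Y ⊆ Y') (hab : KConn k Y a b) : KConn k Y' a b := by
  obtain ⟨n, c, h0, hn, hm, hd⟩ := hab
  exact ⟨n, c, h0, hn, fun i hi => h (hm i hi), hd⟩

lemma kconn_mem_right (hab : KConn k Y a b) : b ∈ Y := by
  obtain ⟨n, c, h0, hn, hm, hd⟩ := hab
  exact hn ▸ hm n le_rfl

lemma kconn_step (ha : a ∈ Y) (hb : b ∈ Y) (h : dist a b ≤ k) : KConn k Y a b := by
  refine ⟨1, fun i => if i = 0 then a else b, by simp, by simp, fun i hi => ?_, fun i hi => ?_⟩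
  · by_cases h0 : i = 0 <;> simp [h0, ha, hb]
  · have : i = 0 := by omega
    simp [this, h]

lemma kconn_symm (h : KConn k Y a b) : KConn k Y b a := by
  obtain ⟨n, c, h0, hn, hm, hd⟩ := h
  refine ⟨n, fun i => c (n - i), by simp [hn], by simp [h0], fun i _ => hm _ (by omega),
    fun i hi => ?_⟩
  have e : n - i = (n - (i + 1)) + 1 := by omega
  show dist (c (n - i)) (c (n - (i+1))) ≤ k
  rw [e, dist_comm]
  exact hd _ (by omega)

lemma kconn_trans {c : X} (h1 : KConn k Y a b) (h2 : KConn k Y b c) : KConn k Y a c := by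
  obtain ⟨n, p, hp0, hpn, hpm, hpd⟩ := h1
  obtain ⟨m, q, hq0, hqm, hqmem, hqd⟩ := h2
  refine ⟨n + m, fun i => if i ≤ n then p i else q (i - n), by simp [hp0], ?_, fun i hi => ?_,
    fun i hi => ?_⟩
  · by_cases hm0 : m = 0
    · subst hm0
      show (if n + 0 ≤ n then p (n+0) else q (n+0-n)) = c
      rw [if_pos (by omega : n + 0 ≤ n), Nat.add_zero, hpn, ← hq0]
      exact hqm
    · have e : ¬ (n + m ≤ n) := by omega
      have e2 : n + m - n = m := by omega
      show (if n + m ≤ n then p (n+m) else q (n+m-n)) = c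
      rw [if_neg e, e2, hqm]
  · by_cases hin : i ≤ n
    · simpa [hin] using hpm i hin
    · simpa [hin] using hqmem (i - n) (by omega)
  · by_cases h1' : i + 1 ≤ n
    · have : i ≤ n := by omega
      simpa [this, h1'] using hpd i (by omega)
    · by_cases h2' : i ≤ n
      · have hi' : i = n := by omega
        have e1 : ¬ (i + 1 ≤ n) := h1'
        have e2 : i + 1 - n = 1 := by omega
        show dist (if i ≤ n then p i else q (i-n)) (if i+1 ≤ n then p (i+1) else q (i+1-n)) ≤ k
        rw [if_pos h2', if_neg e1, e2, hi', hpn, ← hq0]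
        exact hqd 0 (by omega)
      · have e2 : i + 1 - n = (i - n) + 1 := by omega
        show dist (if i ≤ n then p i else q (i-n)) (if i+1 ≤ n then p (i+1) else q (i+1-n)) ≤ k
        rw [if_neg h2', if_neg (by omega : ¬ i + 1 ≤ n), e2]
        exact hqd (i - n) (by omega)

lemma kconn_of_path {c : ℕ → X} {n : ℕ} (h : IsKPath k Y c n) {i : ℕ} (hi : i ≤ n) :
    KConn k Y (c 0) (c i) :=
  ⟨i, c, rfl, rfl, fun j hj => h.1 j (le_trans hj hi), fun j hj => h.2 j (lt_of_lt_of_le hj hi)⟩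

/-- The `k`-component of `x` in `W`. -/
def Cl (k : ℝ) (W : Set X) (x : X) : Set X := {y | KConn k W x y}

lemma cl_subset : Cl k W x ⊆ W := fun _ hy => kconn_mem_right hy

lemma mem_cl_self (hx : x ∈ W) : x ∈ Cl k W x := kconn_refl hx

lemma cl_trans (hy : y ∈ Cl k W x) (hz : z ∈ Cl k W y) : z ∈ Cl k W x := kconn_trans hy hz

lemma isKComponent_cl (hx : x ∈ W) : IsKComponent k W (Cl k W x) := by
  refine ⟨cl_subset, ?_, ?_⟩
  · intro a ha b hb
    obtain ⟨n, c, h0, hn, hm, hd⟩ := kconn_trans (kconn_symm ha) hb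
    refine ⟨n, c, h0, hn, fun i hi => ?_, hd⟩
    have h1 : KConn k W (c 0) (c i) := kconn_of_path ⟨hm, hd⟩ hi
    rw [h0] at h1
    exact cl_trans ha h1
  · intro C' hsub hsub' hconn'
    refine Set.Subset.antisymm (fun y hy => ?_) hsub
    exact kconn_mono hsub' (hconn' x (hsub (mem_cl_self hx)) y hy)

/-- `B` is a saturated subset of `W` (a union of `k`-components). -/
def Sat (k : ℝ) (W B : Set X) : Prop := B ⊆ W ∧ ∀ x ∈ B, Cl k W x ⊆ B

lemma sat_empty : Sat k W (∅ : Set X) := ⟨Set.empty_subset _, fun x hx => absurd hx (by simp)⟩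

lemma sat_cl (hx : x ∈ W) : Sat k W (Cl k W x) :=
  ⟨cl_subset, fun _ hy _ hz => cl_trans hy hz⟩

lemma sat_union {B C : Set X} (hB : Sat k W B) (hC : Sat k W C) : Sat k W (B ∪ C) := by
  refine ⟨Set.union_subset hB.1 hC.1, fun x hx => ?_⟩
  rcases hx with hx | hx
  · exact fun z hz => Or.inl (hB.2 x hx hz)
  · exact fun z hz => Or.inr (hC.2 x hx hz)

lemma sat_diff_cl (hx : x ∈ W) : Sat k W (W \ Cl k W x) := by
  refine ⟨Set.diff_subset, fun y hy z hz => ⟨cl_subset hz, fun hzx => hy.2 ?_⟩⟩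
  exact cl_trans hzx (kconn_symm hz)
end Aux
section Aux2
variable {X : Type*} [PseudoMetricSpace X] {k r : ℝ} {A S B : Set X}

lemma boundary_subset (hS : S ⊆ A) (hB : Sat r (A \ S) B) :
    (thickSet B r \ B) ∩ A ⊆ S := by
  rintro x ⟨⟨⟨b, hbB, hdist⟩, hxB⟩, hxA⟩
  by_contra hxS
  have hxW : x ∈ A \ S := ⟨hxA, hxS⟩
  have hbW : b ∈ A \ S := hB.1 hbB
  have hx : x ∈ Cl r (A \ S) b := kconn_step hbW hxW (by rw [dist_comm]; exact hdist)
  exact hxB (hB.2 b hbB hx)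

lemma ncard_biUnion_le' {α Z : Type*} (t : Finset α) (f : α → Set Z) :
    (⋃ a ∈ t, f a).ncard ≤ ∑ a ∈ t, (f a).ncard := by
  classical
  induction t using Finset.induction_on with
  | empty => simp
  | @insert a s ha ih =>
      rw [Finset.set_biUnion_insert, Finset.sum_insert ha]
      exact (Set.ncard_union_le _ _).trans (by omega)

lemma thickSet_eq_biUnion (hBfin : B.Finite) :
    thickSet B r = ⋃ a ∈ hBfin.toFinset, Metric.closedBall a r := by
  ext x
  simp [thickSet, Metric.mem_closedBall]

lemma thickSet_finite (hBfin : B.Finite) (hball : ∀ x : X, (Metric.closedBall x r).Finite) :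
    (thickSet B r).Finite := by
  rw [thickSet_eq_biUnion hBfin]
  exact (hBfin.toFinset.finite_toSet).biUnion fun a _ => hball a

lemma ncard_thickSet_le {N : ℕ} (hBfin : B.Finite)
    (hball : ∀ x : X, (Metric.closedBall x r).ncard ≤ N) :
    (thickSet B r).ncard ≤ N * B.ncard := by
  rw [thickSet_eq_biUnion hBfin]
  refine (ncard_biUnion_le' _ _).trans ?_
  calc ∑ a ∈ hBfin.toFinset, (Metric.closedBall a r).ncard
      ≤ ∑ _a ∈ hBfin.toFinset, N := Finset.sum_le_sum fun a _ => hball a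
    _ = hBfin.toFinset.card * N := by rw [Finset.sum_const, smul_eq_mul]
    _ = N * B.ncard := by rw [Set.ncard_eq_toFinset_card B hBfin, mul_comm]

end Aux2
/-- `cut_r^δ(A) ≥ λ·h_r(A)·|A|` with `λ = min(1/4, (1−δ)/2) / β_X(r)`. -/
theorem cutVal_ge_cheeger
    {X : Type*} [MetricSpace X] (hud : UDBG X) (k : ℝ) (hk : 1 ≤ k)
    (hconn : KCoarselyConnected k (Set.univ : Set X))
    (r : ℝ) (hr : k ≤ r) (A : Set X) (hA : Bornology.IsBounded A)
    (δ : ℝ) (hδ0 : 0 < δ) (hδ1 : δ < 1) :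
    (min (1 / 4) ((1 - δ) / 2) / (ballVolSup X r : ℝ)) * cheeger r A * (A.ncard : ℝ) ≤
      (cutVal r δ A : ℝ) := by
  classical
  set m : ℝ := min (1 / 4) ((1 - δ) / 2) with hm_def
  have hm0 : 0 < m := lt_min (by norm_num) (by linarith)
  have hm14 : m ≤ 1 / 4 := min_le_left _ _
  have hmδ : m ≤ (1 - δ) / 2 := min_le_right _ _
  set β : ℕ := ballVolSup X r with hβ_def
  have hch : cheeger r A = sInf {v : ℝ | ∃ B : Set X, B ⊆ A ∧ 0 < B.ncard ∧
      (B.ncard : ℝ) ≤ (A.ncard : ℝ) / 2 ∧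
      v = (((thickSet B r \ B) ∩ A).ncard : ℝ) / (B.ncard : ℝ)} := rfl
  set 𝒮 : Set ℝ := {v : ℝ | ∃ B : Set X, B ⊆ A ∧ 0 < B.ncard ∧
      (B.ncard : ℝ) ≤ (A.ncard : ℝ) / 2 ∧
      v = (((thickSet B r \ B) ∩ A).ncard : ℝ) / (B.ncard : ℝ)} with h𝒮_def
  rcases Set.eq_empty_or_nonempty 𝒮 with hS0 | hSne
  · rw [hch, hS0, Real.sInf_empty, mul_zero, zero_mul]
    exact Nat.cast_nonneg _
  -- the Cheeger set is nonempty
  obtain ⟨v₀, hv₀mem⟩ := hSne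
  obtain ⟨B₀, hB₀A, hB₀pos, hB₀half, hv₀⟩ := hv₀mem
  obtain ⟨b₀, hb₀⟩ := Set.nonempty_of_ncard_ne_zero hB₀pos.ne'
  have ha₀ : b₀ ∈ A := hB₀A hb₀
  -- balls
  obtain ⟨N, hN⟩ := hud.2 r
  have hbd : BddAbove (Set.range fun x : X => (Metric.closedBall x r).ncard) :=
    ⟨N, by rintro n ⟨x, rfl⟩; exact (hN x).2⟩
  have hball_le : ∀ x : X, (Metric.closedBall x r).ncard ≤ β := fun x => le_ciSup hbd x
  have hball_fin : ∀ x : X, (Metric.closedBall x r).Finite := fun x => (hN x).1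
  have hr0 : (0 : ℝ) ≤ r := by linarith
  have hβ1 : 1 ≤ β := by
    refine le_trans ?_ (hball_le b₀)
    have hmem : b₀ ∈ Metric.closedBall b₀ r := by simp [hr0]
    have := (Set.ncard_pos (hball_fin b₀)).mpr ⟨b₀, hmem⟩
    omega
  have hβ1' : (1 : ℝ) ≤ (β : ℝ) := by exact_mod_cast hβ1
  have hβ0 : (0 : ℝ) < (β : ℝ) := by linarith
  -- A is finite
  have hAfin : A.Finite := by
    obtain ⟨R, hR⟩ := (Metric.isBounded_iff_subset_closedBall b₀).mp hA
    obtain ⟨N', hN'⟩ := hud.2 R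
    exact (hN' b₀).1.subset hR
  have hA2 : (2 : ℝ) ≤ (A.ncard : ℝ) := by
    have h1 : (1 : ℝ) ≤ (B₀.ncard : ℝ) := by exact_mod_cast hB₀pos
    linarith
  have hApos : (0 : ℝ) < (A.ncard : ℝ) := by linarith
  -- cheeger basics
  have h𝒮0 : ∀ v ∈ 𝒮, 0 ≤ v := by
    rintro v ⟨B, -, -, -, rfl⟩
    positivity
  have hbdd : BddBelow 𝒮 := ⟨0, h𝒮0⟩
  have hh0 : 0 ≤ cheeger r A := by
    rw [hch]
    exact le_csInf ⟨v₀, B₀, hB₀A, hB₀pos, hB₀half, hv₀⟩ h𝒮0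
  have h𝒮β : ∀ v ∈ 𝒮, v ≤ (β : ℝ) := by
    rintro v ⟨B, hBA, hBpos, -, rfl⟩
    have hBfin : B.Finite := hAfin.subset hBA
    have hsub : (thickSet B r \ B) ∩ A ⊆ thickSet B r := fun x hx => hx.1.1
    have hcard : ((thickSet B r \ B) ∩ A).ncard ≤ β * B.ncard :=
      le_trans (Set.ncard_le_ncard hsub (thickSet_finite hBfin hball_fin))
        (ncard_thickSet_le hBfin hball_le)
    have hBpos' : (0 : ℝ) < (B.ncard : ℝ) := by exact_mod_cast hBpos
    rw [div_le_iff₀ hBpos']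
    exact_mod_cast hcard
  -- an optimal cut S
  have hcutA : IsCut r δ A A := by
    refine ⟨subset_rfl, fun C hC => ?_⟩
    have hC0 : C = ∅ := Set.subset_empty_iff.mp (by simpa using hC.1)
    rw [hC0]
    simp only [Set.ncard_empty, Nat.cast_zero]
    positivity
  obtain ⟨S, hScut, hScard⟩ :
      cutVal r δ A ∈ {n : ℕ | ∃ S : Set X, IsCut r δ A S ∧ S.ncard = n} :=
    Nat.sInf_mem ⟨A.ncard, A, hcutA, rfl⟩
  have hSA : S ⊆ A := hScut.1
  have hSfin : S.Finite := hAfin.subset hSA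
  have hSval : (cutVal r δ A : ℝ) = (S.ncard : ℝ) := by rw [hScard]
  rw [hSval]
  by_cases hcase : m * (A.ncard : ℝ) ≤ (S.ncard : ℝ)
  · -- easy case : the cut is large
    have hhβ : cheeger r A ≤ (β : ℝ) :=
      le_trans (by rw [hch]; exact csInf_le hbdd ⟨B₀, hB₀A, hB₀pos, hB₀half, hv₀⟩)
        (h𝒮β v₀ ⟨B₀, hB₀A, hB₀pos, hB₀half, hv₀⟩)
    calc m / (β : ℝ) * cheeger r A * (A.ncard : ℝ)
        ≤ m / (β : ℝ) * (β : ℝ) * (A.ncard : ℝ) := by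
          apply mul_le_mul_of_nonneg_right _ hApos.le
          exact mul_le_mul_of_nonneg_left hhβ (by positivity)
      _ = m * (A.ncard : ℝ) := by rw [div_mul_cancel₀ _ hβ0.ne']
      _ ≤ (S.ncard : ℝ) := hcase
  · -- hard case : the cut is small
    push_neg at hcase
    set W : Set X := A \ S with hW_def
    have hWA : W ⊆ A := Set.diff_subset
    have hWfin : W.Finite := hAfin.subset hWA
    have hWcard : (W.ncard : ℝ) = (A.ncard : ℝ) - (S.ncard : ℝ) :=
      Set.cast_ncard_sdiff hSA hAfin
    have hWbig : (1 - m) * (A.ncard : ℝ) < (W.ncard : ℝ) := by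
      rw [hWcard]; linarith
    have hcomp : ∀ x ∈ W, ((Cl r W x).ncard : ℝ) ≤ δ * (A.ncard : ℝ) :=
      fun x hx => hScut.2 _ (isKComponent_cl hx)
    -- maximal saturated set of volume at most |A|/2
    set T : Set ℕ := {n : ℕ | ∃ B : Set X, Sat r W B ∧ (B.ncard : ℝ) ≤ (A.ncard : ℝ) / 2 ∧
      B.ncard = n} with hT_def
    have hT0 : (0 : ℕ) ∈ T := ⟨∅, sat_empty, by simp; positivity, by simp⟩
    have hTbdd : BddAbove T := by
      refine ⟨A.ncard, ?_⟩
      rintro n ⟨B, hB, -, rfl⟩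
      exact Set.ncard_le_ncard (hB.1.trans hWA) hAfin
    obtain ⟨B, hBsat, hBhalf, hBcard⟩ := Nat.sSup_mem ⟨0, hT0⟩ hTbdd
    have hBA : B ⊆ A := hBsat.1.trans hWA
    have hBfin : B.Finite := hAfin.subset hBA
    -- key claim : a saturated set of volume between m|A| and |A|/2
    have key : ∃ B' : Set X, Sat r W B' ∧ m * (A.ncard : ℝ) ≤ (B'.ncard : ℝ) ∧
        (B'.ncard : ℝ) ≤ (A.ncard : ℝ) / 2 := by
      by_cases hBbig : m * (A.ncard : ℝ) ≤ (B.ncard : ℝ)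
      · exact ⟨B, hBsat, hBbig, hBhalf⟩
      push_neg at hBbig
      have hnotsub : ¬ W ⊆ B := by
        intro hWB
        have h1 : (W.ncard : ℝ) ≤ (B.ncard : ℝ) := by
          exact_mod_cast Set.ncard_le_ncard hWB hBfin
        have hq : (1 - 2 * m) * (A.ncard : ℝ) = (A.ncard : ℝ) - 2 * (m * (A.ncard : ℝ)) := by
          ring
        have hq2 : (0 : ℝ) ≤ (1 - 2 * m) * (A.ncard : ℝ) :=
          mul_nonneg (by linarith) hApos.le
        linarith
      obtain ⟨x₀, hx₀W, hx₀B⟩ := Set.not_subset.mp hnotsub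
      set C : Set X := Cl r W x₀ with hC_def
      have hCW : C ⊆ W := cl_subset
      have hCfin : C.Finite := hWfin.subset hCW
      have hdisj : Disjoint B C := by
        rw [Set.disjoint_left]
        intro x hxB hxC
        exact hx₀B (hBsat.2 x hxB (kconn_symm hxC))
      have hCpos : 0 < C.ncard := (Set.ncard_pos hCfin).mpr ⟨x₀, mem_cl_self hx₀W⟩
      have hno : ¬ ((B ∪ C).ncard : ℝ) ≤ (A.ncard : ℝ) / 2 := by
        intro hle
        have hmem : (B ∪ C).ncard ∈ T := ⟨B ∪ C, sat_union hBsat (sat_cl hx₀W), hle, rfl⟩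
        have hle' : (B ∪ C).ncard ≤ sSup T := le_csSup hTbdd hmem
        have hu : (B ∪ C).ncard = B.ncard + C.ncard :=
          Set.ncard_union_eq hdisj hBfin hCfin
        omega
      push_neg at hno
      have hu : ((B ∪ C).ncard : ℝ) = (B.ncard : ℝ) + (C.ncard : ℝ) := by
        exact_mod_cast Set.ncard_union_eq hdisj hBfin hCfin
      have hClarge : (A.ncard : ℝ) / 2 - m * (A.ncard : ℝ) < (C.ncard : ℝ) := by
        rw [hu] at hno; linarith
      by_cases hChalf : (C.ncard : ℝ) ≤ (A.ncard : ℝ) / 2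
      · refine ⟨C, sat_cl hx₀W, ?_, hChalf⟩
        have hq : (1 / 4 - m) * (A.ncard : ℝ) = (A.ncard : ℝ) / 4 - m * (A.ncard : ℝ) := by
          ring
        have hq2 : (0 : ℝ) ≤ (1 / 4 - m) * (A.ncard : ℝ) := mul_nonneg (by linarith) hApos.le
        linarith
      · push_neg at hChalf
        refine ⟨W \ C, sat_diff_cl hx₀W, ?_, ?_⟩
        · have hd : ((W \ C).ncard : ℝ) = (W.ncard : ℝ) - (C.ncard : ℝ) :=
            Set.cast_ncard_sdiff hCW hWfin
          have hCδ := hcomp x₀ hx₀W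
          rw [hd]
          have hq : (1 - 2 * m - δ) * (A.ncard : ℝ) =
              (A.ncard : ℝ) - 2 * (m * (A.ncard : ℝ)) - δ * (A.ncard : ℝ) := by ring
          have hq2 : (0 : ℝ) ≤ (1 - 2 * m - δ) * (A.ncard : ℝ) :=
            mul_nonneg (by linarith) hApos.le
          linarith
        · have hd : ((W \ C).ncard : ℝ) = (W.ncard : ℝ) - (C.ncard : ℝ) :=
            Set.cast_ncard_sdiff hCW hWfin
          have hWle : (W.ncard : ℝ) ≤ (A.ncard : ℝ) := by
            exact_mod_cast Set.ncard_le_ncard hWA hAfin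
          rw [hd]; linarith
    obtain ⟨B', hB'sat, hB'low, hB'half⟩ := key
    have hB'A : B' ⊆ A := hB'sat.1.trans hWA
    have hB'pos : 0 < B'.ncard := by
      have : (0 : ℝ) < (B'.ncard : ℝ) := lt_of_lt_of_le (by positivity) hB'low
      exact_mod_cast this
    have hB'pos' : (0 : ℝ) < (B'.ncard : ℝ) := by exact_mod_cast hB'pos
    have hbdy : (thickSet B' r \ B') ∩ A ⊆ S := boundary_subset hSA hB'sat
    have hbdycard : (((thickSet B' r \ B') ∩ A).ncard : ℝ) ≤ (S.ncard : ℝ) := by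
      exact_mod_cast Set.ncard_le_ncard hbdy hSfin
    have hmemv : (((thickSet B' r \ B') ∩ A).ncard : ℝ) / (B'.ncard : ℝ) ∈ 𝒮 :=
      ⟨B', hB'A, hB'pos, hB'half, rfl⟩
    have hhle : cheeger r A ≤ (((thickSet B' r \ B') ∩ A).ncard : ℝ) / (B'.ncard : ℝ) := by
      rw [hch]; exact csInf_le hbdd hmemv
    have hmul : cheeger r A * (B'.ncard : ℝ) ≤ (S.ncard : ℝ) := by
      have := (le_div_iff₀ hB'pos').mp hhle
      linarith
    have hmain : m * cheeger r A * (A.ncard : ℝ) ≤ (S.ncard : ℝ) := by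
      have h1 : cheeger r A * (m * (A.ncard : ℝ)) ≤ cheeger r A * (B'.ncard : ℝ) :=
        mul_le_mul_of_nonneg_left hB'low hh0
      have hq : cheeger r A * (m * (A.ncard : ℝ)) = m * cheeger r A * (A.ncard : ℝ) := by ring
      linarith
    calc m / (β : ℝ) * cheeger r A * (A.ncard : ℝ)
        ≤ m * cheeger r A * (A.ncard : ℝ) := by
          apply mul_le_mul_of_nonneg_right _ hApos.le
          apply mul_le_mul_of_nonneg_right _ hh0
          exact div_le_self hm0.le hβ1'
      _ ≤ (S.ncard : ℝ) := hmain
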